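/- Let M be a left Rees monoid. Then M is isomorphic to a monoid HNN-extension of a group: there exist a group G, a set I, subgroups H_i ≤ G and group homomorphisms ρ_i : H_i → G (i ∈ I) such that M is isomorphic as a monoid to ⟨G, t_i (i ∈ I) | relations of G, h t_i = t_i ρ_i(h) for all h ∈ H_i⟩. -/

import Mathlib

universe u v

/-- The principal right ideal `aM` of a monoid. -/
def prIdeal {M : Type*} [Monoid M] (a : M) : Set M := Set.range fun m => a * m

/-- A left Rees monoid: a left cancellative, right rigid monoid in which every principal
right ideal is contained in only finitely many distinct principal right ideals. -/
def IsLeftReesMonoid (M : Type*) [Monoid M] : Prop :=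
  (∀ a b c : M, a * b = a * c → b = c) ∧
  (∀ a b : M, (prIdeal a ∩ prIdeal b).Nonempty →
    prIdeal a ⊆ prIdeal b ∨ prIdeal b ⊆ prIdeal a) ∧
  (∀ a : M, {S : Set M | (∃ b : M, S = prIdeal b) ∧ prIdeal a ⊆ S}.Finite)

/-- The defining relations of the monoid HNN-extension
`⟨G, tᵢ (i ∈ I) | relations of G, h tᵢ = tᵢ ρᵢ(h) for h ∈ Hᵢ⟩`. -/
inductive HNNRel (G : Type u) [Group G] {I : Type v} (H : I → Subgroup G)
    (ρ : ∀ i, H i →* G) : FreeMonoid (G ⊕ I) → FreeMonoid (G ⊕ I) → Prop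
  | mul (g h : G) : HNNRel G H ρ
      (FreeMonoid.of (Sum.inl g) * FreeMonoid.of (Sum.inl h))
      (FreeMonoid.of (Sum.inl (g * h)))
  | one : HNNRel G H ρ (FreeMonoid.of (Sum.inl (1 : G))) 1
  | hnn (i : I) (h : H i) : HNNRel G H ρ
      (FreeMonoid.of (Sum.inl (h : G)) * FreeMonoid.of (Sum.inr i))
      (FreeMonoid.of (Sum.inr i) * FreeMonoid.of (Sum.inl (ρ i h)))

/-- The monoid HNN-extension of `G` with associated subgroups `Hᵢ`, homomorphisms `ρᵢ`
and stable letters `tᵢ`. -/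
abbrev HNNMonoid (G : Type u) [Group G] {I : Type v} (H : I → Subgroup G)
    (ρ : ∀ i, H i →* G) :=
  (conGen (HNNRel G H ρ)).Quotient

namespace ReesHNN

variable {M : Type u} [Monoid M]

def above (a : M) : Set (Set M) := {S | (∃ b : M, S = prIdeal b) ∧ prIdeal a ⊆ S}

lemma mem_prIdeal_self (a : M) : a ∈ prIdeal a := ⟨1, mul_one a⟩

lemma prIdeal_subset_iff {a b : M} : prIdeal a ⊆ prIdeal b ↔ ∃ c, a = b * c := by
  constructor
  · intro h
    obtain ⟨c, hc⟩ := h (mem_prIdeal_self a)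
    exact ⟨c, hc.symm⟩
  · rintro ⟨c, rfl⟩ x ⟨m, rfl⟩
    exact ⟨c * m, (mul_assoc ..).symm⟩

lemma prIdeal_one : prIdeal (1 : M) = Set.univ := by
  ext x; simp [prIdeal]

lemma univ_mem_above (a : M) : Set.univ ∈ above a :=
  ⟨⟨1, prIdeal_one.symm⟩, Set.subset_univ _⟩

lemma self_mem_above (a : M) : prIdeal a ∈ above a := ⟨⟨a, rfl⟩, subset_rfl⟩

lemma above_finite (hM : IsLeftReesMonoid M) (a : M) : (above a).Finite := hM.2.2 a

lemma isUnit_of_prIdeal_eq_univ (hM : IsLeftReesMonoid M) {a : M}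
    (h : prIdeal a = Set.univ) : IsUnit a := by
  have h1 : (1 : M) ∈ prIdeal a := h ▸ Set.mem_univ 1
  obtain ⟨b, hb⟩ := h1
  have hb' : a * b = 1 := hb
  have hba : b * a = 1 := hM.1 a _ _ (by rw [← mul_assoc, hb', one_mul, mul_one])
  exact ⟨⟨a, b, hb', hba⟩, rfl⟩

lemma prIdeal_eq_univ_of_isUnit {a : M} (h : IsUnit a) : prIdeal a = Set.univ := by
  obtain ⟨u, rfl⟩ := h
  ext x
  refine ⟨fun _ => trivial, fun _ => ⟨(↑u⁻¹ : M) * x, ?_⟩⟩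
  show (↑u : M) * ((↑u⁻¹ : M) * x) = x
  rw [← mul_assoc, Units.mul_inv, one_mul]

lemma exists_unit_of_prIdeal_eq (hM : IsLeftReesMonoid M) {a b : M}
    (h : prIdeal a = prIdeal b) : ∃ u : Mˣ, a = b * u := by
  obtain ⟨c, hc⟩ := prIdeal_subset_iff.1 h.le
  obtain ⟨d, hd⟩ := prIdeal_subset_iff.1 h.ge
  have h1 : c * d = 1 := hM.1 b _ _ (by rw [← mul_assoc, ← hc, ← hd, mul_one])
  have h2 : d * c = 1 := hM.1 a _ _ (by rw [← mul_assoc, ← hd, ← hc, mul_one])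
  exact ⟨⟨c, d, h1, h2⟩, hc⟩

lemma prIdeal_mul_unit (a : M) (u : Mˣ) : prIdeal (a * ↑u) = prIdeal a := by
  apply le_antisymm
  · exact prIdeal_subset_iff.2 ⟨↑u, rfl⟩
  · exact prIdeal_subset_iff.2 ⟨↑u⁻¹, by rw [mul_assoc, Units.mul_inv, mul_one]⟩

noncomputable def len (a : M) : ℕ := (above a).ncard - 1

lemma one_le_ncard_above (hM : IsLeftReesMonoid M) (a : M) : 1 ≤ (above a).ncard :=
  (Set.ncard_pos (above_finite hM a)).2 ⟨_, self_mem_above a⟩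

lemma ncard_above (hM : IsLeftReesMonoid M) (a : M) : (above a).ncard = len a + 1 := by
  have := one_le_ncard_above hM a
  unfold len; omega

lemma image_prIdeal (a d : M) : (a * ·) '' prIdeal d = prIdeal (a * d) := by
  ext x
  constructor
  · rintro ⟨y, ⟨m, rfl⟩, rfl⟩
    exact ⟨m, by simp [mul_assoc]⟩
  · rintro ⟨m, rfl⟩
    exact ⟨d * m, ⟨m, rfl⟩, by simp [mul_assoc]⟩

lemma above_mul (hM : IsLeftReesMonoid M) (a b : M) :
    above (a * b) = above a ∪ (Set.image (a * ·)) '' above b := by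
  ext S
  constructor
  · rintro ⟨⟨c, rfl⟩, hsub⟩
    have hmem : a * b ∈ prIdeal c := hsub (mem_prIdeal_self _)
    rcases hM.2.1 a c ⟨a * b, ⟨b, rfl⟩, hmem⟩ with h | h
    · exact Or.inl ⟨⟨c, rfl⟩, h⟩
    · obtain ⟨d, rfl⟩ := prIdeal_subset_iff.1 h
      refine Or.inr ⟨prIdeal d, ⟨⟨d, rfl⟩, ?_⟩, image_prIdeal a d⟩
      obtain ⟨m, hm⟩ := hmem
      have hm' : a * d * m = a * b := hm
      have : a * b = a * (d * m) := by rw [← hm', mul_assoc]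
      exact prIdeal_subset_iff.2 ⟨m, hM.1 a _ _ this⟩
  · rintro (⟨⟨c, rfl⟩, hsub⟩ | ⟨T, ⟨⟨d, rfl⟩, hsub⟩, rfl⟩)
    · exact ⟨⟨c, rfl⟩, subset_trans (prIdeal_subset_iff.2 ⟨b, rfl⟩) hsub⟩
    · refine ⟨⟨a * d, image_prIdeal a d⟩, ?_⟩
      rw [image_prIdeal]
      obtain ⟨m, hm⟩ := prIdeal_subset_iff.1 hsub
      exact prIdeal_subset_iff.2 ⟨m, by rw [mul_assoc, ← hm]⟩

lemma above_inter (hM : IsLeftReesMonoid M) (a b : M) :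
    above a ∩ (Set.image (a * ·)) '' above b = {prIdeal a} := by
  ext S
  simp only [Set.mem_inter_iff, Set.mem_singleton_iff]
  constructor
  · rintro ⟨⟨_, hSa⟩, T, ⟨⟨d, rfl⟩, _⟩, rfl⟩
    rw [image_prIdeal] at hSa ⊢
    exact le_antisymm (prIdeal_subset_iff.2 ⟨d, rfl⟩) hSa
  · rintro rfl
    refine ⟨self_mem_above a, prIdeal 1, ⟨⟨1, rfl⟩, by rw [prIdeal_one]; exact Set.subset_univ _⟩, ?_⟩
    rw [image_prIdeal, mul_one]

lemma len_mul (hM : IsLeftReesMonoid M) (a b : M) : len (a * b) = len a + len b := by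
  have hinj : Function.Injective (Set.image (a * ·) : Set M → Set M) :=
    Set.image_injective.2 (fun x y h => hM.1 a x y h)
  have key := Set.ncard_union_add_ncard_inter (above a) ((Set.image (a * ·)) '' above b)
    (above_finite hM a) ((above_finite hM b).image _)
  rw [← above_mul hM, above_inter hM, Set.ncard_singleton,
    Set.ncard_image_of_injective _ hinj, ncard_above hM, ncard_above hM, ncard_above hM] at key
  omega

lemma len_eq_zero_iff (hM : IsLeftReesMonoid M) {a : M} : len a = 0 ↔ IsUnit a := by
  constructor
  · intro h
    have hcard : (above a).ncard = 1 := by rw [ncard_above hM, h]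
    obtain ⟨S, hS⟩ := Set.ncard_eq_one.1 hcard
    have h1 : prIdeal a ∈ ({S} : Set (Set M)) := hS ▸ self_mem_above a
    have h2 : Set.univ ∈ ({S} : Set (Set M)) := hS ▸ univ_mem_above a
    exact isUnit_of_prIdeal_eq_univ hM (h1.trans h2.symm)
  · intro h
    have : above a = {Set.univ} := by
      apply le_antisymm
      · rintro S ⟨_, hsub⟩
        rw [prIdeal_eq_univ_of_isUnit h] at hsub
        exact Set.univ_subset_iff.1 hsub
      · rintro S rfl
        exact univ_mem_above a
    unfold len
    rw [this, Set.ncard_singleton]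


lemma exists_atom_factor (hM : IsLeftReesMonoid M) :
    ∀ n (a : M), len a = n → n ≠ 0 → ∃ (x b : M), len x = 1 ∧ a = x * b := by
  intro n
  induction n using Nat.strong_induction_on with
  | _ n ih =>
    intro a hn h0
    by_cases h1 : len a = 1
    · exact ⟨a, 1, h1, (mul_one a).symm⟩
    · have h2 : 2 ≤ n := by omega
      have hcard : 3 ≤ (above a).ncard := by rw [ncard_above hM, hn]; omega
      have hne : ¬ (above a ⊆ {prIdeal a, Set.univ}) := by
        intro hsub
        have := Set.ncard_le_ncard hsub ((Set.finite_singleton _).insert _)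
        have h4 : ({prIdeal a, Set.univ} : Set (Set M)).ncard ≤ 2 :=
          (Set.ncard_insert_le _ _).trans (by rw [Set.ncard_singleton])
        omega
      obtain ⟨S, hS, hS2⟩ := Set.not_subset.1 hne
      simp only [Set.mem_insert_iff, Set.mem_singleton_iff, not_or] at hS2
      obtain ⟨⟨c, rfl⟩, hsub⟩ := hS
      obtain ⟨d, rfl⟩ := prIdeal_subset_iff.1 hsub
      have hc0 : len c ≠ 0 := by
        intro h
        exact hS2.2 (prIdeal_eq_univ_of_isUnit ((len_eq_zero_iff hM).1 h))
      have hd0 : len d ≠ 0 := by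
        intro h
        obtain ⟨u, rfl⟩ := (len_eq_zero_iff hM).1 h
        exact hS2.1 (prIdeal_mul_unit c u).symm
      have hlen := len_mul hM c d
      obtain ⟨x, b, hx, hcb⟩ := ih (len c) (by omega) c rfl hc0
      exact ⟨x, b * d, hx, by rw [hcb, mul_assoc]⟩

/-- Atoms: elements of length one. -/
abbrev Atom (M : Type u) [Monoid M] : Type u := {a : M // len a = 1}

/-- Two atoms are related if they generate the same ideal up to left unit translation. -/
def atomSetoid (M : Type u) [Monoid M] : Setoid (Atom M) where
  r x y := ∃ g u : Mˣ, (y : M) = ↑g * ↑x * ↑u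
  iseqv := by
    constructor
    · exact fun x => ⟨1, 1, by simp⟩
    · rintro x y ⟨g, u, h⟩
      refine ⟨g⁻¹, u⁻¹, ?_⟩
      rw [h, mul_assoc ((↑g : M)) ((x : M)) ((↑u : M)), Units.inv_mul_cancel_left,
        Units.mul_inv_cancel_right]
    · rintro x y z ⟨g, u, h⟩ ⟨g', u', h'⟩
      refine ⟨g' * g, u * u', ?_⟩
      rw [h', h, Units.val_mul, Units.val_mul]
      simp only [mul_assoc]

/-- The stabilizer of `x` in the group of units: units `g` with `g • (xM) = xM`. -/
def stab (x : M) : Subgroup Mˣ where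
  carrier := {g | ∃ u : Mˣ, (↑g : M) * x = x * ↑u}
  one_mem' := ⟨1, by simp⟩
  mul_mem' := by
    rintro g g' ⟨u, hu⟩ ⟨u', hu'⟩
    refine ⟨u * u', ?_⟩
    rw [Units.val_mul, Units.val_mul, mul_assoc, hu', ← mul_assoc, hu, mul_assoc]
  inv_mem' := by
    rintro g ⟨u, hu⟩
    refine ⟨u⁻¹, ?_⟩
    have key : (↑g⁻¹ : M) * (↑g * x) * ↑u⁻¹ = ↑g⁻¹ * x := by
      rw [hu, mul_assoc, Units.mul_inv_cancel_right]
    rw [← key, Units.inv_mul_cancel_left]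

lemma unit_unique (hM : IsLeftReesMonoid M) {x : M} {u v : Mˣ}
    (h : x * ↑u = x * ↑v) : u = v := Units.ext (hM.1 x _ _ h)

/-- The partial homomorphism `ρ` associated with `x`. -/
noncomputable def rho (hM : IsLeftReesMonoid M) (x : M) : stab x →* Mˣ where
  toFun g := Classical.choose g.2
  map_one' := by
    apply unit_unique hM (x := x)
    rw [← Classical.choose_spec (1 : stab x).2]
    simp
  map_mul' := by
    intro g g'
    have h0 := Classical.choose_spec (g * g').2
    have h1 := Classical.choose_spec g.2
    have h2 := Classical.choose_spec g'.2
    apply unit_unique hM (x := x)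
    show x * ↑(Classical.choose (g * g').2)
        = x * ↑(Classical.choose g.2 * Classical.choose g'.2)
    conv_lhs => rw [← h0]
    conv_rhs => rw [Units.val_mul, ← mul_assoc, ← h1, mul_assoc, ← h2, ← mul_assoc]
    norm_cast

lemma rho_spec (hM : IsLeftReesMonoid M) (x : M) (g : stab x) :
    (↑(↑g : Mˣ) : M) * x = x * ↑(rho hM x g) := Classical.choose_spec g.2


lemma prIdeal_eq_of_subset (hM : IsLeftReesMonoid M) {x y : M} (hx : len x = 1)
    (hy : len y = 1) (h : prIdeal x ⊆ prIdeal y) : prIdeal x = prIdeal y := by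
  obtain ⟨c, rfl⟩ := prIdeal_subset_iff.1 h
  have hlen := len_mul hM y c
  have hc : len c = 0 := by omega
  obtain ⟨u, rfl⟩ := (len_eq_zero_iff hM).1 hc
  exact prIdeal_mul_unit y u

variable (M) in
/-- The index set: equivalence classes of atoms. -/
def idx : Type u := Quotient (atomSetoid M)

noncomputable def rep (i : idx M) : M := ↑(Quotient.out i)

lemma len_rep (i : idx M) : len (rep i) = 1 := (Quotient.out i).2

noncomputable def Hs (i : idx M) : Subgroup Mˣ := stab (rep i)

noncomputable def rhoI (hM : IsLeftReesMonoid M) (i : idx M) : Hs i →* Mˣ :=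
  rho hM (rep i)

lemma rhoI_spec (hM : IsLeftReesMonoid M) (i : idx M) (g : Hs i) :
    (↑(↑g : Mˣ) : M) * rep i = rep i * ↑(rhoI hM i g) := rho_spec hM (rep i) g

/-- Evaluation of words in `M`. -/
noncomputable def F : FreeMonoid (Mˣ ⊕ idx M) →* M :=
  FreeMonoid.lift (Sum.elim (fun u => (u : M)) rep)

@[simp] lemma F_inl (g : Mˣ) : F (FreeMonoid.of (Sum.inl g)) = (↑g : M) :=
  FreeMonoid.lift_eval_of _ _

@[simp] lemma F_inr (i : idx M) : F (FreeMonoid.of (Sum.inr i)) = rep i :=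
  FreeMonoid.lift_eval_of _ _

/-- The congruence defining the HNN extension. -/
abbrev CC (hM : IsLeftReesMonoid M) : Con (FreeMonoid (Mˣ ⊕ idx M)) :=
  conGen (HNNRel Mˣ Hs (rhoI hM))

lemma hker (hM : IsLeftReesMonoid M) :
    ∀ w v, HNNRel Mˣ Hs (rhoI hM) w v → (Con.ker F) w v := by
  intro w v h
  rw [Con.ker_rel]
  induction h with
  | mul g h => simp
  | one => simp
  | hnn i h => simp [rhoI_spec hM i h]

/-- Normal form words. -/
def nf : Mˣ → List (idx M × Mˣ) → FreeMonoid (Mˣ ⊕ idx M)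
  | g, [] => FreeMonoid.of (Sum.inl g)
  | g, (i, h) :: l =>
      FreeMonoid.of (Sum.inl g) * FreeMonoid.of (Sum.inr i) * nf h l

@[simp] lemma F_nf_nil (g : Mˣ) : F (nf g ([] : List (idx M × Mˣ))) = (↑g : M) := by
  simp [nf]

@[simp] lemma F_nf_cons (g h : Mˣ) (i : idx M) (l : List (idx M × Mˣ)) :
    F (nf g ((i, h) :: l)) = ↑g * rep i * F (nf h l) := by
  simp [nf]

lemma len_F_nf (hM : IsLeftReesMonoid M) (g : Mˣ) (l : List (idx M × Mˣ)) :
    len (F (nf g l)) = l.length := by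
  induction l generalizing g with
  | nil => simpa using (len_eq_zero_iff hM).2 g.isUnit
  | cons p t ih =>
    obtain ⟨i, h⟩ := p
    rw [F_nf_cons, len_mul hM, len_mul hM, (len_eq_zero_iff hM).2 g.isUnit, len_rep, ih h]
    simp only [List.length_cons]
    omega

lemma F_nf_unit (v h : Mˣ) (l : List (idx M × Mˣ)) :
    F (nf (v * h) l) = ↑v * F (nf h l) := by
  cases l with
  | nil => simp
  | cons p t =>
    obtain ⟨i, h'⟩ := p
    simp [mul_assoc]

/-- Prepending a unit letter to a normal form. -/
lemma cc_unit_cons (hM : IsLeftReesMonoid M) (g' g : Mˣ) (l : List (idx M × Mˣ)) :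
    CC hM (FreeMonoid.of (Sum.inl g') * nf g l) (nf (g' * g) l) := by
  cases l with
  | nil => exact ConGen.Rel.of _ _ (HNNRel.mul g' g)
  | cons p t =>
    obtain ⟨i, h⟩ := p
    show CC hM (FreeMonoid.of (Sum.inl g') *
        (FreeMonoid.of (Sum.inl g) * FreeMonoid.of (Sum.inr i) * nf h t))
      (FreeMonoid.of (Sum.inl (g' * g)) * FreeMonoid.of (Sum.inr i) * nf h t)
    have e : FreeMonoid.of (Sum.inl g') *
        (FreeMonoid.of (Sum.inl g) * FreeMonoid.of (Sum.inr i) * nf h t)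
        = (FreeMonoid.of (Sum.inl g') * FreeMonoid.of (Sum.inl g)) *
          (FreeMonoid.of (Sum.inr i) * nf h t) := by
      simp [mul_assoc]
    have e2 : FreeMonoid.of (Sum.inl (g' * g)) * FreeMonoid.of (Sum.inr i) * nf h t
        = FreeMonoid.of (Sum.inl (g' * g)) * (FreeMonoid.of (Sum.inr i) * nf h t) := by
      simp [mul_assoc]
    rw [e, e2]
    exact (CC hM).mul (ConGen.Rel.of _ _ (HNNRel.mul g' g)) ((CC hM).refl _)

lemma cc_normalize (hM : IsLeftReesMonoid M) (w : FreeMonoid (Mˣ ⊕ idx M)) :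
    ∃ g l, CC hM w (nf g l) := by
  induction w using FreeMonoid.recOn with
  | one => exact ⟨1, [], (CC hM).symm (ConGen.Rel.of _ _ HNNRel.one)⟩
  | of_mul x xs ihx =>
    obtain ⟨g, l, hgl⟩ := ihx
    cases x with
    | inl g' =>
      exact ⟨g' * g, l, ((CC hM).mul ((CC hM).refl (FreeMonoid.of (Sum.inl g'))) hgl).trans
        (cc_unit_cons hM g' g l)⟩
    | inr i =>
      refine ⟨1, (i, g) :: l, ?_⟩
      have h1 : CC hM (FreeMonoid.of (Sum.inr i) * xs) (FreeMonoid.of (Sum.inr i) * nf g l) :=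
        (CC hM).mul ((CC hM).refl _) hgl
      have h2 : CC hM (FreeMonoid.of (Sum.inr i) * nf g l)
          (FreeMonoid.of (Sum.inl (1 : Mˣ)) * (FreeMonoid.of (Sum.inr i) * nf g l)) := by
        have := (CC hM).mul ((CC hM).symm (ConGen.Rel.of _ _ HNNRel.one))
          ((CC hM).refl (FreeMonoid.of (Sum.inr i) * nf g l))
        rwa [one_mul] at this
      have e : FreeMonoid.of (Sum.inl (1 : Mˣ)) * (FreeMonoid.of (Sum.inr i) * nf g l)
          = nf 1 ((i, g) :: l) := by simp [nf, mul_assoc]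
      rw [e] at h2
      exact h1.trans h2


open FreeMonoid in
lemma nf_eq (hM : IsLeftReesMonoid M) :
    ∀ (l l' : List (idx M × Mˣ)) (g g' : Mˣ),
      F (nf g l) = F (nf g' l') → CC hM (nf g l) (nf g' l') := by
  intro l
  induction l with
  | nil =>
    intro l' g g' h
    have hlen : (0 : ℕ) = l'.length := by
      have := congrArg len h
      rwa [len_F_nf hM, len_F_nf hM, List.length_nil] at this
    obtain rfl : l' = [] := (List.length_eq_zero_iff.1 hlen.symm)
    rw [F_nf_nil, F_nf_nil] at h
    obtain rfl : g = g' := Units.ext h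
    exact (CC hM).refl _
  | cons p t ih =>
    intro l' g g' h
    obtain ⟨i, hh⟩ := p
    cases l' with
    | nil =>
      exfalso
      have := congrArg len h
      rw [len_F_nf hM, len_F_nf hM] at this
      simp at this
    | cons p' t' =>
      obtain ⟨i', hh'⟩ := p'
      rw [F_nf_cons, F_nf_cons] at h
      -- the two leading atoms generate the same ideal
      have latom : len ((↑g : M) * rep i) = 1 := by
        rw [len_mul hM, (len_eq_zero_iff hM).2 g.isUnit, len_rep]
      have latom' : len ((↑g' : M) * rep i') = 1 := by
        rw [len_mul hM, (len_eq_zero_iff hM).2 g'.isUnit, len_rep]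
      have hmem : (↑g : M) * rep i * F (nf hh t) ∈
          prIdeal ((↑g : M) * rep i) ∩ prIdeal ((↑g' : M) * rep i') := by
        constructor
        · exact ⟨F (nf hh t), rfl⟩
        · exact ⟨F (nf hh' t'), h.symm⟩
      have hid : prIdeal ((↑g : M) * rep i) = prIdeal ((↑g' : M) * rep i') := by
        rcases hM.2.1 _ _ ⟨_, hmem⟩ with hc | hc
        · exact prIdeal_eq_of_subset hM latom latom' hc
        · exact (prIdeal_eq_of_subset hM latom' latom hc).symm
      obtain ⟨v, hv⟩ := exists_unit_of_prIdeal_eq hM hid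
      -- i = i'
      have e1 : (↑(g'⁻¹ * g) : M) * rep i * ↑v⁻¹ = rep i' := by
        rw [Units.val_mul, mul_assoc ((↑g'⁻¹ : M)) ((↑g : M)) (rep i), hv,
          mul_assoc ((↑g' : M)) (rep i') ((↑v : M)), Units.inv_mul_cancel_left,
          Units.mul_inv_cancel_right]
      obtain rfl : i = i' := by
        rw [← Quotient.out_eq (s := atomSetoid M) i, ← Quotient.out_eq (s := atomSetoid M) i']
        exact Quotient.sound ⟨g'⁻¹ * g, v⁻¹, e1.symm⟩
      -- the stabilizer element
      set k : Mˣ := g'⁻¹ * g with hk_def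
      have hk : (↑k : M) * rep i = rep i * ↑v := by
        rw [hk_def, Units.val_mul, mul_assoc, hv, mul_assoc ((↑g' : M)) (rep i) ((↑v : M)),
          Units.inv_mul_cancel_left]
      have kmem : k ∈ Hs i := ⟨v, hk⟩
      have hrho : rhoI hM i ⟨k, kmem⟩ = v := by
        apply unit_unique hM (x := rep i)
        rw [← rhoI_spec hM i ⟨k, kmem⟩]
        exact hk
      -- cancellation
      have hgk : g' * k = g := mul_inv_cancel_left g' g
      have hcan : (↑v : M) * F (nf hh t) = F (nf hh' t') := by
        apply hM.1 ((↑g' : M) * rep i)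
        have lhs : (↑g' : M) * rep i * ((↑v : M) * F (nf hh t))
            = ↑g * rep i * F (nf hh t) := by
          rw [← hgk, Units.val_mul, mul_assoc ((↑g' : M)) ((↑k : M)) (rep i), hk]
          simp only [mul_assoc]
        rw [lhs, h, mul_assoc]
      have hF : F (nf (v * hh) t) = F (nf hh' t') := by rw [F_nf_unit, hcan]
      have ihres : CC hM (nf (v * hh) t) (nf hh' t') := ih t' (v * hh) hh' hF
      -- build the congruence chain
      have c1 : CC hM (of (Sum.inl g)) (of (Sum.inl g') * of (Sum.inl k)) := by
        have := (CC hM).symm (ConGen.Rel.of _ _ (HNNRel.mul (H := Hs) (ρ := rhoI hM) g' k))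
        rwa [hgk] at this
      have c2 : CC hM (of (Sum.inl k) * of (Sum.inr i)) (of (Sum.inr i) * of (Sum.inl v)) := by
        have := ConGen.Rel.of _ _ (HNNRel.hnn (H := Hs) (ρ := rhoI hM) i ⟨k, kmem⟩)
        rwa [hrho] at this
      have c3 : CC hM (of (Sum.inl v) * nf hh t) (nf (v * hh) t) := cc_unit_cons hM v hh t
      show CC hM (of (Sum.inl g) * of (Sum.inr i) * nf hh t)
        (of (Sum.inl g') * of (Sum.inr i) * nf hh' t')
      have s1 : CC hM (of (Sum.inl g) * of (Sum.inr i) * nf hh t)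
          (of (Sum.inl g') * of (Sum.inl k) * of (Sum.inr i) * nf hh t) :=
        (CC hM).mul ((CC hM).mul c1 ((CC hM).refl _)) ((CC hM).refl _)
      have s2 : CC hM (of (Sum.inl g') * of (Sum.inl k) * of (Sum.inr i) * nf hh t)
          (of (Sum.inl g') * (of (Sum.inr i) * of (Sum.inl v)) * nf hh t) := by
        have e : of (Sum.inl g') * of (Sum.inl k) * of (Sum.inr i) * nf hh t
            = of (Sum.inl g') * (of (Sum.inl k) * of (Sum.inr i)) * nf hh t := by
          simp [mul_assoc]
        rw [e]
        exact (CC hM).mul ((CC hM).mul ((CC hM).refl _) c2) ((CC hM).refl _)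
      have s3 : CC hM (of (Sum.inl g') * (of (Sum.inr i) * of (Sum.inl v)) * nf hh t)
          (of (Sum.inl g') * of (Sum.inr i) * nf hh' t') := by
        have e : of (Sum.inl g') * (of (Sum.inr i) * of (Sum.inl v)) * nf hh t
            = of (Sum.inl g') * of (Sum.inr i) * (of (Sum.inl v) * nf hh t) := by
          simp [mul_assoc]
        rw [e]
        exact (CC hM).mul ((CC hM).refl _) (c3.trans ihres)
      exact (s1.trans s2).trans s3


lemma F_surj (hM : IsLeftReesMonoid M) :
    ∀ n (a : M), len a = n → ∃ w, F w = a := by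
  intro n
  induction n using Nat.strong_induction_on with
  | _ n ihn =>
    intro a hn
    by_cases h0 : n = 0
    · subst h0
      obtain ⟨u, rfl⟩ := (len_eq_zero_iff hM).1 hn
      exact ⟨FreeMonoid.of (Sum.inl u), F_inl u⟩
    · obtain ⟨x, b, hx, rfl⟩ := exists_atom_factor hM n a hn h0
      have hlen := len_mul hM x b
      have hb : len b = n - 1 := by omega
      set xA : Atom M := ⟨x, hx⟩ with hxA
      set i : idx M := Quotient.mk (atomSetoid M) xA with hi
      obtain ⟨g, u, hgu⟩ := Quotient.mk_out (s := atomSetoid M) xA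
      -- hgu : ↑xA = ↑g * ↑(out ⟦xA⟧) * ↑u, i.e. x = ↑g * rep i * ↑u
      have hgu' : x = ↑g * rep i * ↑u := hgu
      have hub : len ((↑u : M) * b) = n - 1 := by
        rw [len_mul hM, (len_eq_zero_iff hM).2 u.isUnit, hb, zero_add]
      obtain ⟨w', hw'⟩ := ihn (n - 1) (by omega) ((↑u : M) * b) hub
      refine ⟨FreeMonoid.of (Sum.inl g) * FreeMonoid.of (Sum.inr i) * w', ?_⟩
      rw [map_mul, map_mul, F_inl, F_inr, hw', hgu']
      simp only [mul_assoc]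

end ReesHNN

/-- every left Rees monoid is isomorphic to a monoid HNN-extension of a
group. -/
theorem stmt8 (M : Type u) [Monoid M] (hM : IsLeftReesMonoid M) :
    ∃ (G : Type u) (_ : Group G) (I : Type u) (H : I → Subgroup G) (ρ : ∀ i, H i →* G),
      Nonempty (M ≃* HNNMonoid G H ρ) := by
  classical
  refine ⟨Mˣ, inferInstance, ReesHNN.idx M, ReesHNN.Hs, ReesHNN.rhoI hM, ⟨?_⟩⟩
  have hle : conGen (HNNRel Mˣ ReesHNN.Hs (ReesHNN.rhoI hM)) ≤ Con.ker ReesHNN.F :=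
    Con.conGen_le.2 (ReesHNN.hker hM)
  let φ : HNNMonoid Mˣ ReesHNN.Hs (ReesHNN.rhoI hM) →* M :=
    Con.lift _ ReesHNN.F hle
  have hφ : ∀ w : FreeMonoid (Mˣ ⊕ ReesHNN.idx M), φ ↑w = ReesHNN.F w :=
    fun w => Con.lift_coe hle w
  have hinj : Function.Injective φ := by
    intro q q'
    induction q, q' using Con.induction_on₂ with
    | _ w v =>
      intro h
      rw [hφ, hφ] at h
      obtain ⟨g, l, hw⟩ := ReesHNN.cc_normalize hM w
      obtain ⟨g', l', hv⟩ := ReesHNN.cc_normalize hM v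
      have e1 : ReesHNN.F w = ReesHNN.F (ReesHNN.nf g l) := hle hw
      have e2 : ReesHNN.F v = ReesHNN.F (ReesHNN.nf g' l') := hle hv
      have e3 : ReesHNN.F (ReesHNN.nf g l) = ReesHNN.F (ReesHNN.nf g' l') := by
        rw [← e1, ← e2, h]
      have hC := ReesHNN.nf_eq hM l l' g g' e3
      exact (Con.eq _).2 ((hw.trans hC).trans hv.symm)
  have hsurj : Function.Surjective φ := by
    intro a
    obtain ⟨w, hw⟩ := ReesHNN.F_surj hM (ReesHNN.len a) a rfl
    exact ⟨↑w, by rw [hφ, hw]⟩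
  exact (MulEquiv.ofBijective φ ⟨hinj, hsurj⟩).symm
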